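/- For all spanoids S₁ on a finite set X₁ and S₂ on a finite set X₂: rank(S₁ ⋉ S₂) = rank(S₁) · rank(S₂), where ⋉ denotes the semi-direct product of spanoids. -/

import Mathlib

open scoped BigOperators

/-- A spanoid on ground set `X`: a set of inference rules `(A, i)`,
read as "`A` spans `i`". -/
abbrev SpanoidOn (X : Type) : Type := Set (Set X × X)

/-- The span of `T`: the smallest superset `T'` of `T` such that whenever `(A, i)` is a
rule with `A ⊆ T'`, also `i ∈ T'`. -/
def sSpan {X : Type} (S : SpanoidOn X) (T : Set X) : Set X :=
  ⋂₀ {T' : Set X | T ⊆ T' ∧ ∀ p ∈ S, p.1 ⊆ T' → p.2 ∈ T'}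

/-- The rank of a spanoid: the minimum size of a subset spanning the whole ground set. -/
noncomputable def sRank {X : Type} [Fintype X] (S : SpanoidOn X) : ℕ :=
  sInf {k : ℕ | ∃ T : Set X, T.ncard = k ∧ sSpan S T = Set.univ}

/-- A set is closed if it equals its own span. -/
def sClosed {X : Type} (S : SpanoidOn X) (B : Set X) : Prop := sSpan S B = B

/-- A set is open if its complement is closed. -/
def sOpen {X : Type} (S : SpanoidOn X) (B : Set X) : Prop := sClosed S Bᶜ

/-- A code `C ⊆ K^X` is consistent with the spanoid `S` if for every rule `(A, i)` of `S`
there is a function `g` with `c i = g (c|_A)` for all codewords `c ∈ C`. -/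
def sConsistent {X K : Type} (S : SpanoidOn X) (C : Set (X → K)) : Prop :=
  ∀ p ∈ S, ∃ g : (↥p.1 → K) → K, ∀ c ∈ C, c p.2 = g (fun a => c a.1)

/-- The functional rank of a spanoid: the supremum of `log |C| / log |Σ|` over all finite
alphabets `Σ` (of size at least 2) and all codes `C ⊆ Σ^X` consistent with `S`. -/
noncomputable def sFrank {X : Type} (S : SpanoidOn X) : ℝ :=
  sSup {d : ℝ | ∃ m : ℕ, 2 ≤ m ∧ ∃ C : Set (X → Fin m),
    sConsistent S C ∧ d = Real.log (Nat.card C) / Real.log m}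

/-- Feasibility for the entropy linear program of a spanoid. -/
def sEntFeasible {X : Type} (S : SpanoidOn X) (f : Set X → ℝ) : Prop :=
  f ∅ = 0 ∧ (∀ i : X, f {i} ≤ 1) ∧
  (∀ A B : Set X, f (A ∪ B) + f (A ∩ B) ≤ f A + f B) ∧
  (∀ A B : Set X, A ⊆ B → f A ≤ f B) ∧
  (∀ A : Set X, ∀ i ∈ sSpan S A, f (A ∪ {i}) = f A)

/-- The optimum of the entropy linear program: maximize `f(X)` over feasible `f`. -/
noncomputable def sLPentropy {X : Type} (S : SpanoidOn X) : ℝ :=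
  sSup {y : ℝ | ∃ f : Set X → ℝ, sEntFeasible S f ∧ y = f Set.univ}

/-- The optimum of the covering linear program: minimize `∑ i, x i` over `x ≥ 0` such that
`∑_{i ∈ B} x i ≥ 1` for every nonempty open set `B`. -/
noncomputable def sLPcover {X : Type} [Fintype X] (S : SpanoidOn X) : ℝ :=
  sInf {y : ℝ | ∃ x : X → ℝ, (∀ i, 0 ≤ x i) ∧
    (∀ B : Set X, B.Nonempty → sOpen S B → 1 ≤ ∑ i, B.indicator x i) ∧
    y = ∑ i, x i}

/-- A spanoid on `[n]` is a `q`-LCS with error-tolerance `δ` if every `i` is spanned by at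
least `δ n` pairwise disjoint `q`-element subsets. -/
def sIsLCS {n : ℕ} (q : ℕ) (δ : ℝ) (S : SpanoidOn (Fin n)) : Prop :=
  ∀ i : Fin n, ∃ M : Finset (Finset (Fin n)),
    δ * n ≤ (M.card : ℝ) ∧
    (∀ A ∈ M, A.card = q) ∧
    ((M : Set (Finset (Fin n))).Pairwise fun A B => Disjoint A B) ∧
    ∀ A ∈ M, ((A : Set (Fin n)), i) ∈ S

/-- The semi-direct product `S₁ ⋉ S₂` on `X₁ × X₂`: whenever `A ⊨ i` in `S₁` and `j ∈ X₂`,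
the rule `(A × X₂, (i,j))`; and whenever `B ⊨ j` in `S₂` and `i ∈ X₁`, the rule
`({i} × B, (i,j))`. -/
def semidirect {X₁ X₂ : Type} (S₁ : SpanoidOn X₁) (S₂ : SpanoidOn X₂) :
    SpanoidOn (X₁ × X₂) :=
  {p | (∃ (A : Set X₁) (i : X₁) (j : X₂), i ∈ sSpan S₁ A ∧
          p = (A ×ˢ (Set.univ : Set X₂), (i, j))) ∨
       (∃ (B : Set X₂) (i : X₁) (j : X₂), j ∈ sSpan S₂ B ∧
          p = (({i} : Set X₁) ×ˢ B, (i, j)))}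


section AuxSpanoid

variable {X : Type}

lemma subset_sSpan (S : SpanoidOn X) (T : Set X) : T ⊆ sSpan S T := by
  intro x hx
  exact Set.mem_sInter.2 fun T' hT' => hT'.1 hx

lemma sSpan_min (S : SpanoidOn X) {T T' : Set X} (h1 : T ⊆ T')
    (h2 : ∀ p ∈ S, p.1 ⊆ T' → p.2 ∈ T') : sSpan S T ⊆ T' :=
  Set.sInter_subset_of_mem ⟨h1, h2⟩

lemma sSpan_rule (S : SpanoidOn X) {T : Set X} {p : Set X × X} (hp : p ∈ S)
    (h : p.1 ⊆ sSpan S T) : p.2 ∈ sSpan S T := by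
  refine Set.mem_sInter.2 fun T' hT' => ?_
  exact hT'.2 p hp (h.trans (Set.sInter_subset_of_mem hT'))

lemma sSpan_mono (S : SpanoidOn X) {T U : Set X} (h : T ⊆ U) : sSpan S T ⊆ sSpan S U :=
  sSpan_min S (h.trans (subset_sSpan S U)) fun _ hp => sSpan_rule S hp

lemma sSpan_idem (S : SpanoidOn X) (T : Set X) : sSpan S (sSpan S T) = sSpan S T :=
  Set.Subset.antisymm (sSpan_min S Set.Subset.rfl fun _ hp => sSpan_rule S hp)
    (subset_sSpan S _)

lemma sRank_le {X : Type} [Fintype X] (S : SpanoidOn X) {T : Set X}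
    (h : sSpan S T = Set.univ) : sRank S ≤ T.ncard :=
  Nat.sInf_le ⟨T, rfl, h⟩

lemma sRank_exists {X : Type} [Fintype X] (S : SpanoidOn X) :
    ∃ T : Set X, T.ncard = sRank S ∧ sSpan S T = Set.univ := by
  have hne : {k : ℕ | ∃ T : Set X, T.ncard = k ∧ sSpan S T = Set.univ}.Nonempty :=
    ⟨(Set.univ : Set X).ncard, Set.univ, rfl,
      Set.eq_univ_of_univ_subset (subset_sSpan S _)⟩
  exact Nat.sInf_mem hne

end AuxSpanoid

/-- rank is multiplicative under semi-direct product. -/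
theorem rank_semidirect_mul {X₁ X₂ : Type} [Fintype X₁] [Fintype X₂]
    (S₁ : SpanoidOn X₁) (S₂ : SpanoidOn X₂) :
    sRank (semidirect S₁ S₂) = sRank S₁ * sRank S₂ := by
  classical
  obtain ⟨T₁, hT₁card, hT₁⟩ := sRank_exists S₁
  obtain ⟨T₂, hT₂card, hT₂⟩ := sRank_exists S₂
  have step1 : ∀ i ∈ T₁, ∀ j : X₂, (i, j) ∈ sSpan (semidirect S₁ S₂) (T₁ ×ˢ T₂) := by
    intro i hi j
    have h2 : sSpan S₂ T₂ ⊆ {j : X₂ | (i, j) ∈ sSpan (semidirect S₁ S₂) (T₁ ×ˢ T₂)} := by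
      apply sSpan_min
      · intro b hb
        exact subset_sSpan _ _ (Set.mk_mem_prod hi hb)
      · intro p hp hsub
        have hrule : ((({i} : Set X₁) ×ˢ p.1, (i, p.2)) : Set (X₁ × X₂) × (X₁ × X₂))
            ∈ semidirect S₁ S₂ :=
          Or.inr ⟨p.1, i, p.2, sSpan_rule S₂ hp (subset_sSpan S₂ p.1), rfl⟩
        refine sSpan_rule _ hrule ?_
        rintro ⟨a, b⟩ ⟨ha, hb⟩
        rw [Set.mem_singleton_iff] at ha
        subst ha
        exact hsub hb
    exact h2 (hT₂ ▸ Set.mem_univ j)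
  have step2 : sSpan S₁ T₁ ⊆
      {i : X₁ | ∀ j, (i, j) ∈ sSpan (semidirect S₁ S₂) (T₁ ×ˢ T₂)} := by
    apply sSpan_min
    · intro i hi
      exact step1 i hi
    · intro p hp hsub
      intro j
      have hrule : ((p.1 ×ˢ (Set.univ : Set X₂), (p.2, j)) : Set (X₁ × X₂) × (X₁ × X₂))
          ∈ semidirect S₁ S₂ :=
        Or.inl ⟨p.1, p.2, j, sSpan_rule S₁ hp (subset_sSpan S₁ p.1), rfl⟩
      refine sSpan_rule _ hrule ?_
      rintro ⟨a, b⟩ ⟨ha, -⟩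
      exact hsub ha b
  have hup : sSpan (semidirect S₁ S₂) (T₁ ×ˢ T₂) = Set.univ := by
    apply Set.eq_univ_of_forall
    rintro ⟨i, j⟩
    exact step2 (hT₁ ▸ Set.mem_univ i) j
  have hprodcard : (T₁ ×ˢ T₂).ncard = T₁.ncard * T₂.ncard := by
    rw [Set.ncard_eq_toFinset_card', Set.ncard_eq_toFinset_card',
      Set.ncard_eq_toFinset_card', Set.toFinset_prod, Finset.card_product]
  have hlow : ∀ T : Set (X₁ × X₂), sSpan (semidirect S₁ S₂) T = Set.univ →
      sRank S₁ * sRank S₂ ≤ T.ncard := by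
    intro T hT
    set Tf : X₁ → Set X₂ := fun i => {j | (i, j) ∈ T} with hTfdef
    set V : Set X₁ := {i | sSpan S₂ (Tf i) = Set.univ} with hVdef
    have hTZ : T ⊆ {p : X₁ × X₂ | p.1 ∈ sSpan S₁ V ∨ p.2 ∈ sSpan S₂ (Tf p.1)} :=
      fun p hp => Or.inr (subset_sSpan S₂ _ hp)
    have hZclosed : ∀ p ∈ semidirect S₁ S₂,
        p.1 ⊆ {p : X₁ × X₂ | p.1 ∈ sSpan S₁ V ∨ p.2 ∈ sSpan S₂ (Tf p.1)} →
        p.2 ∈ {p : X₁ × X₂ | p.1 ∈ sSpan S₁ V ∨ p.2 ∈ sSpan S₂ (Tf p.1)} := by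
      rintro p hp hsub
      rcases hp with ⟨A, i, j, hi, rfl⟩ | ⟨B, i, j, hj, rfl⟩
      · left
        have hAW : A ⊆ sSpan S₁ V := by
          intro a ha
          by_cases haW : a ∈ sSpan S₁ V
          · exact haW
          · refine subset_sSpan S₁ V ?_
            show sSpan S₂ (Tf a) = Set.univ
            apply Set.eq_univ_of_forall
            intro j'
            have hmem : (a, j') ∈ {p : X₁ × X₂ | p.1 ∈ sSpan S₁ V ∨
                p.2 ∈ sSpan S₂ (Tf p.1)} :=
              hsub (Set.mk_mem_prod ha (Set.mem_univ j'))
            rcases hmem with h | h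
            · exact absurd h haW
            · exact h
        have hiW : i ∈ sSpan S₁ (sSpan S₁ V) := sSpan_mono S₁ hAW hi
        rwa [sSpan_idem] at hiW
      · by_cases hiW : i ∈ sSpan S₁ V
        · exact Or.inl hiW
        · right
          have hB : B ⊆ sSpan S₂ (Tf i) := by
            intro b hb
            have hmem : (i, b) ∈ {p : X₁ × X₂ | p.1 ∈ sSpan S₁ V ∨
                p.2 ∈ sSpan S₂ (Tf p.1)} :=
              hsub (Set.mk_mem_prod rfl hb)
            rcases hmem with h | h
            · exact absurd h hiW
            · exact h
          have hj' : j ∈ sSpan S₂ (sSpan S₂ (Tf i)) := sSpan_mono S₂ hB hj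
          rwa [sSpan_idem] at hj'
    have hZuniv : ∀ p : X₁ × X₂,
        p ∈ {p : X₁ × X₂ | p.1 ∈ sSpan S₁ V ∨ p.2 ∈ sSpan S₂ (Tf p.1)} := by
      intro p
      have hsp : sSpan (semidirect S₁ S₂) T ⊆
          {p : X₁ × X₂ | p.1 ∈ sSpan S₁ V ∨ p.2 ∈ sSpan S₂ (Tf p.1)} :=
        sSpan_min _ hTZ hZclosed
      exact hsp (hT ▸ Set.mem_univ p)
    have hV : sSpan S₁ V = Set.univ := by
      apply Set.eq_univ_of_forall
      intro i
      by_cases hiW : i ∈ sSpan S₁ V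
      · exact hiW
      · refine subset_sSpan S₁ V ?_
        show sSpan S₂ (Tf i) = Set.univ
        apply Set.eq_univ_of_forall
        intro j
        rcases hZuniv (i, j) with h | h
        · exact absurd h hiW
        · exact h
    have hr₁ : sRank S₁ ≤ V.ncard := sRank_le S₁ hV
    have hcount : V.ncard * sRank S₂ ≤ T.ncard := by
      rw [Set.ncard_eq_toFinset_card' T, Set.ncard_eq_toFinset_card' V]
      have hdecomp : T.toFinset.card =
          ∑ i : X₁, (T.toFinset.filter (fun p => p.1 = i)).card :=
        Finset.card_eq_sum_card_fiberwise (fun p _ => Finset.mem_univ p.1)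
      have hterm : ∀ i ∈ V.toFinset,
          sRank S₂ ≤ (T.toFinset.filter (fun p => p.1 = i)).card := by
        intro i hi
        have hi' : i ∈ V := Set.mem_toFinset.mp hi
        have h1 : sRank S₂ ≤ (Tf i).ncard := sRank_le S₂ hi'
        have h2 : (Tf i).toFinset.card ≤ (T.toFinset.filter (fun p => p.1 = i)).card := by
          apply Finset.card_le_card_of_injOn (fun j => (i, j))
          · intro j hj
            rw [Finset.mem_coe, Set.mem_toFinset] at hj
            simp only [Finset.mem_coe, Finset.mem_filter, Set.mem_toFinset]
            exact ⟨hj, trivial⟩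
          · intro a _ b _ h
            exact congrArg Prod.snd h
        rw [Set.ncard_eq_toFinset_card'] at h1
        exact h1.trans h2
      calc V.toFinset.card * sRank S₂ = ∑ _i ∈ V.toFinset, sRank S₂ := by
            rw [Finset.sum_const, smul_eq_mul]
        _ ≤ ∑ i ∈ V.toFinset, (T.toFinset.filter (fun p => p.1 = i)).card :=
            Finset.sum_le_sum hterm
        _ ≤ ∑ i : X₁, (T.toFinset.filter (fun p => p.1 = i)).card :=
            Finset.sum_le_sum_of_subset (Finset.subset_univ _)
        _ = T.toFinset.card := hdecomp.symm
    calc sRank S₁ * sRank S₂ ≤ V.ncard * sRank S₂ := Nat.mul_le_mul_right _ hr₁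
      _ ≤ T.ncard := hcount
  apply le_antisymm
  · calc sRank (semidirect S₁ S₂) ≤ (T₁ ×ˢ T₂).ncard := sRank_le _ hup
      _ = sRank S₁ * sRank S₂ := by rw [hprodcard, hT₁card, hT₂card]
  · obtain ⟨T, hTcard, hTspan⟩ := sRank_exists (semidirect S₁ S₂)
    rw [← hTcard]
    exact hlow T hTspan
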